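/- Let I_1,…,I_k be homogeneous ideals of ℂ[z]. Then in H²_d one has: (1) F_{I_1+…+I_k} = F_{I_1} ∩ … ∩ F_{I_k}, i.e. F_{I_1+…+I_k} is the orthogonal complement of the algebraic sum F_{I_1}^⊥ + … + F_{I_k}^⊥; and (2) F_{I_1∩…∩I_k} is the closure of the algebraic sum F_{I_1} + … + F_{I_k}. -/

import Mathlib

open scoped InnerProductSpace
open MvPolynomial Module

noncomputable section

/-- The `n`-th approximation number of a bounded operator: the distance from `T`
to the set of operators of rank at most `n`. For compact operators on Hilbert space
these are the singular values. -/
def approxNumber {H K : Type*} [NormedAddCommGroup H] [NormedAddCommGroup K]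
    [NormedSpace ℂ H] [NormedSpace ℂ K] (T : H →L[ℂ] K) (n : ℕ) : ℝ :=
  sInf {c : ℝ | ∃ F : H →L[ℂ] K,
    Module.rank ℂ (LinearMap.range (F : H →ₗ[ℂ] K)) ≤ (n : Cardinal) ∧ c = ‖T - F‖}

/-- Membership in the Schatten `p`-class, expressed via approximation numbers
(= singular values): `∑ aₙ(T)^p < ∞`. -/
def MemSchatten {H K : Type*} [NormedAddCommGroup H] [NormedAddCommGroup K]
    [NormedSpace ℂ H] [NormedSpace ℂ K] (p : ℝ) (T : H →L[ℂ] K) : Prop :=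
  Summable fun n : ℕ => approxNumber T n ^ p


/-- Helper instance: the bounded operators on a normed space form a topological semiring. -/
instance {F : Type*} [NormedAddCommGroup F] [NormedSpace ℂ F] :
    IsTopologicalSemiring (F →L[ℂ] F) := inferInstance

/-- The Drury–Arveson space `H²_d`: a Hilbert space completion of `ℂ[z₁,…,z_d]`
with the inner product `⟨z^α, z^β⟩ = δ_{αβ} α!/(|α|)!`, together with the `d`-shift. -/
structure DruryArveson (d : ℕ) where
  H : Type
  [normedAddCommGroup : NormedAddCommGroup H]
  [innerProductSpace : InnerProductSpace ℂ H]
  [completeSpace : CompleteSpace H]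
  emb : MvPolynomial (Fin d) ℂ →ₗ[ℂ] H
  denseRange : DenseRange emb
  inner_monomial : ∀ α β : Fin d →₀ ℕ,
    (inner ℂ (emb (monomial α (1 : ℂ))) (emb (monomial β (1 : ℂ))) : ℂ) =
      if α = β then (∏ i, ((α i).factorial : ℂ)) / ((∑ i, α i).factorial : ℂ) else 0
  shift : Fin d → H →L[ℂ] H
  shift_apply : ∀ (i : Fin d) (p : MvPolynomial (Fin d) ℂ), shift i (emb p) = emb (X i * p)

attribute [instance] DruryArveson.normedAddCommGroup DruryArveson.innerProductSpace
  DruryArveson.completeSpace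

namespace DruryArveson

variable {d : ℕ} (DA : DruryArveson d)

/-- The quotient module `F_I = H²_d ⊖ closure(I)`. -/
def FI (I : Ideal (MvPolynomial (Fin d) ℂ)) : Submodule ℂ DA.H :=
  ((Submodule.map DA.emb (Submodule.restrictScalars ℂ I)).topologicalClosure)ᗮ

instance (I : Ideal (MvPolynomial (Fin d) ℂ)) : CompleteSpace (DA.FI I) :=
  (Submodule.isClosed_orthogonal _).completeSpace_coe

/-- The compressed shift `S_i^I = P_{F_I} S_i |_{F_I}`. -/
def quotShift (I : Ideal (MvPolynomial (Fin d) ℂ)) (i : Fin d) : DA.FI I →L[ℂ] DA.FI I :=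
  ((DA.FI I).orthogonalProjection).comp ((DA.shift i).comp (DA.FI I).subtypeL)

/-- The orthogonal projection of `H²_d` onto `F_I`, as an operator on `H²_d`. -/
def projFI (I : Ideal (MvPolynomial (Fin d) ℂ)) : DA.H →L[ℂ] DA.H :=
  (DA.FI I).subtypeL.comp ((DA.FI I).orthogonalProjection)

/-- `F_I` is `p`-essentially normal: all commutators `[S_i^I, S_j^{I*}]` lie in
the Schatten `p`-class. -/
def PEssentiallyNormal (I : Ideal (MvPolynomial (Fin d) ℂ)) (p : ℝ) : Prop :=
  ∀ i j : Fin d,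
    MemSchatten p
      (DA.quotShift I i ∘L ContinuousLinearMap.adjoint (DA.quotShift I j)
        - ContinuousLinearMap.adjoint (DA.quotShift I j) ∘L DA.quotShift I i)

end DruryArveson

/-- An ideal of `ℂ[z₁,…,z_d]` is homogeneous if it contains all homogeneous components
of each of its elements. -/
def IsHomogeneousIdeal {d : ℕ} (I : Ideal (MvPolynomial (Fin d) ℂ)) : Prop :=
  ∀ p ∈ I, ∀ n : ℕ, homogeneousComponent n p ∈ I

/-- `HasIdealDim I D` says that `D = deg h_I + 1`, where `h_I` is the Hilbert polynomial
of the homogeneous ideal `I`, i.e. `h_I(n) = dim (H_n ⊖ I_n)` for all large `n`. -/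
def HasIdealDim {d : ℕ} (I : Ideal (MvPolynomial (Fin d) ℂ)) (D : ℕ) : Prop :=
  ∃ h : Polynomial ℚ,
    (∀ᶠ n : ℕ in Filter.atTop,
      h.eval (n : ℚ) =
        ((finrank ℂ ↥(homogeneousSubmodule (Fin d) ℂ n)
          - finrank ℂ ↥(Submodule.restrictScalars ℂ I ⊓ homogeneousSubmodule (Fin d) ℂ n) : ℕ) : ℚ)) ∧
    D = h.natDegree + 1

/-- The zero set in the open unit ball `𝔹_d` of an ideal of polynomials. -/
def zeroVariety {d : ℕ} (I : Ideal (MvPolynomial (Fin d) ℂ)) : Set (EuclideanSpace ℂ (Fin d)) :=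
  {z | ‖z‖ < 1 ∧ ∀ p ∈ I, MvPolynomial.eval (fun i => z i) p = 0}

/-- A homogeneous variety in `𝔹_d` is the zero set in the ball of a homogeneous ideal. -/
def IsHomogeneousVariety {d : ℕ} (V : Set (EuclideanSpace ℂ (Fin d))) : Prop :=
  ∃ I : Ideal (MvPolynomial (Fin d) ℂ), IsHomogeneousIdeal I ∧ V = zeroVariety I

/-- The ideal `I(V)` of polynomials vanishing on `V`. -/
def ballVanishingIdeal {d : ℕ} (V : Set (EuclideanSpace ℂ (Fin d))) :
    Ideal (MvPolynomial (Fin d) ℂ) where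
  carrier := {p | ∀ z ∈ V, MvPolynomial.eval (fun i => z i) p = 0}
  add_mem' := fun hp hq z hz => by simp [hp z hz, hq z hz]
  zero_mem' := fun z hz => by simp
  smul_mem' := fun c p hp z hz => by simp [smul_eq_mul, hp z hz]

/-- `F_V := F_{I(V)}`. -/
def DruryArveson.FV {d : ℕ} (DA : DruryArveson d) (V : Set (EuclideanSpace ℂ (Fin d))) :
    Submodule ℂ DA.H :=
  DA.FI (ballVanishingIdeal V)

section Aux

open Finset

/-- Orthogonal complement of the topological closure equals that of the submodule. -/
lemma orth_topClosure {E : Type*} [NormedAddCommGroup E] [InnerProductSpace ℂ E]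
    [CompleteSpace E] (K : Submodule ℂ E) : (K.topologicalClosure)ᗮ = Kᗮ := by
  rw [← Submodule.orthogonal_orthogonal_eq_closure,
    Submodule.orthogonal_orthogonal_eq_closure,
    K.isClosed_orthogonal.submodule_topologicalClosure_eq]

lemma restrictScalars_iSup' {d k : ℕ} (I : Fin k → Ideal (MvPolynomial (Fin d) ℂ)) :
    Submodule.restrictScalars ℂ (⨆ j, I j) = ⨆ j, Submodule.restrictScalars ℂ (I j) := by
  apply le_antisymm
  · intro x hx
    have hx' : x ∈ ⨆ j, I j := hx
    exact Submodule.iSup_induction (motive := fun y => y ∈ ⨆ j, Submodule.restrictScalars ℂ (I j))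
      _ hx' (fun j y hy => Submodule.mem_iSup_of_mem j hy) (Submodule.zero_mem _)
      (fun a b ha hb => Submodule.add_mem _ ha hb)
  · refine iSup_le fun j x hx => ?_
    rw [Submodule.restrictScalars_mem]
    exact Submodule.mem_iSup_of_mem j hx

namespace DruryArveson

variable {d : ℕ} (DA : DruryArveson d)

lemma inner_emb_monomial (α β : Fin d →₀ ℕ) (a b : ℂ) :
    (inner ℂ (DA.emb (monomial α a)) (DA.emb (monomial β b)) : ℂ) =
      (starRingEnd ℂ) a * b *
        if α = β then (∏ i, ((α i).factorial : ℂ)) / ((∑ i, α i).factorial : ℂ) else 0 := by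
  have ha : monomial α a = a • monomial α (1 : ℂ) := by rw [smul_monomial, smul_eq_mul, mul_one]
  have hb : monomial β b = b • monomial β (1 : ℂ) := by rw [smul_monomial, smul_eq_mul, mul_one]
  rw [ha, hb, map_smul, map_smul, inner_smul_left, inner_smul_right, DA.inner_monomial]
  ring

lemma inner_emb_eq_zero {p q : MvPolynomial (Fin d) ℂ}
    (h : ∀ α ∈ p.support, ∀ β ∈ q.support, α ≠ β) :
    (inner ℂ (DA.emb p) (DA.emb q) : ℂ) = 0 := by
  conv_lhs => rw [p.as_sum, q.as_sum]
  rw [map_sum, map_sum, sum_inner]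
  refine Finset.sum_eq_zero fun α hα => ?_
  rw [inner_sum]
  refine Finset.sum_eq_zero fun β hβ => ?_
  rw [DA.inner_emb_monomial, if_neg (h α hα β hβ), mul_zero]

lemma monomial_weight_ne_zero (α : Fin d →₀ ℕ) :
    (∏ i, ((α i).factorial : ℂ)) / ((∑ i, α i).factorial : ℂ) ≠ 0 := by
  apply div_ne_zero
  · exact Finset.prod_ne_zero_iff.2 fun i _ => Nat.cast_ne_zero.2 (Nat.factorial_ne_zero _)
  · exact Nat.cast_ne_zero.2 (Nat.factorial_ne_zero _)

lemma inner_emb_monomial_one (α : Fin d →₀ ℕ) (p : MvPolynomial (Fin d) ℂ) :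
    (inner ℂ (DA.emb (monomial α (1 : ℂ))) (DA.emb p) : ℂ) =
      coeff α p * ((∏ i, ((α i).factorial : ℂ)) / ((∑ i, α i).factorial : ℂ)) := by
  conv_lhs => rw [p.as_sum]
  rw [map_sum, inner_sum]
  rw [Finset.sum_eq_single α
    (fun β _ hβα => by rw [DA.inner_emb_monomial, if_neg fun h => hβα h.symm, mul_zero])
    (fun hα => by
      rw [MvPolynomial.notMem_support_iff.1 hα, monomial_zero, map_zero, inner_zero_right]),
    DA.inner_emb_monomial, if_pos rfl, map_one, one_mul]

lemma emb_injective : Function.Injective DA.emb := by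
  have key : ∀ r : MvPolynomial (Fin d) ℂ, DA.emb r = 0 → r = 0 := by
    intro r hr
    apply MvPolynomial.ext
    intro α
    have h := DA.inner_emb_monomial_one α r
    rw [hr, inner_zero_right] at h
    have := (mul_eq_zero.1 h.symm).resolve_right (DruryArveson.monomial_weight_ne_zero α)
    simpa using this
  intro p q h
  exact sub_eq_zero.1 (key (p - q) (by rw [map_sub, h, sub_self]))

/-- Truncation of a polynomial to total degree at most `N`. -/
def trunc (N : ℕ) (p : MvPolynomial (Fin d) ℂ) : MvPolynomial (Fin d) ℂ :=
  ∑ n ∈ Finset.range (N + 1), homogeneousComponent n p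

lemma trunc_totalDegree_le (N : ℕ) (p : MvPolynomial (Fin d) ℂ) :
    (trunc N p).totalDegree ≤ N := by
  refine (MvPolynomial.totalDegree_finset_sum _ _).trans (Finset.sup_le fun n hn => ?_)
  exact (homogeneousComponent_isHomogeneous n p).totalDegree_le.trans
    (Nat.lt_succ_iff.1 (Finset.mem_range.1 hn))

lemma inner_emb_sub_trunc (N : ℕ) (p q : MvPolynomial (Fin d) ℂ)
    (hq : q.totalDegree ≤ N) :
    (inner ℂ (DA.emb q) (DA.emb (p - trunc N p)) : ℂ) = 0 := by
  set M := max (p.totalDegree + 1) (N + 1) with hM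
  have hsub : Finset.range (N + 1) ⊆ Finset.range M :=
    Finset.range_subset_range.2 (le_max_right _ _)
  have hp : ∑ n ∈ Finset.range M, homogeneousComponent n p = p := by
    have hss := Finset.sum_subset (f := fun n => homogeneousComponent n p)
      (Finset.range_subset_range.2 (le_max_left (p.totalDegree + 1) (N + 1)))
      (fun n _ hn => homogeneousComponent_eq_zero n p
        (by simp only [Finset.mem_range, not_lt] at hn; omega))
    rw [MvPolynomial.sum_homogeneousComponent] at hss
    exact hss.symm
  have hdiff : p - trunc N p =
      ∑ n ∈ Finset.range M \ Finset.range (N + 1), homogeneousComponent n p := by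
    have h2 := Finset.sum_sdiff (f := fun n => homogeneousComponent n p) hsub
    rw [hp] at h2
    simp only [trunc]
    rw [sub_eq_iff_eq_add]
    exact h2.symm
  rw [hdiff, map_sum, inner_sum]
  refine Finset.sum_eq_zero fun n hn => ?_
  have hNn : N < n := by
    have := (Finset.mem_sdiff.1 hn).2
    simpa [Nat.lt_succ_iff] using this
  refine DA.inner_emb_eq_zero fun α hα β hβ hab => ?_
  have h1 : (α.sum fun _ e => e) ≤ N := (MvPolynomial.le_totalDegree hα).trans hq
  have h2 : (β.sum fun _ e => e) = n := by
    have hcoeff := MvPolynomial.mem_support_iff.1 hβ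
    by_contra hne
    exact hcoeff ((homogeneousComponent_isHomogeneous n p).coeff_eq_zero
      (by simpa [Finsupp.degree_apply, Finsupp.sum] using hne))
  rw [hab, h2] at h1
  omega

lemma orthogonalProjection_emb (N : ℕ) (p : MvPolynomial (Fin d) ℂ) :
    ((Submodule.orthogonalProjection (Submodule.map DA.emb (restrictTotalDegree (Fin d) ℂ N))
      (DA.emb p)) : DA.H) = DA.emb (trunc N p) := by
  show Submodule.starProjection _ (DA.emb p) = _
  apply Submodule.eq_starProjection_of_mem_of_inner_eq_zero
  · exact ⟨trunc N p, (mem_restrictTotalDegree _ _ _).2 (DruryArveson.trunc_totalDegree_le N p), rfl⟩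
  · rintro w ⟨q, hq, rfl⟩
    rw [← map_sub, inner_eq_zero_symm]
    exact DA.inner_emb_sub_trunc N p q ((mem_restrictTotalDegree _ _ _).1 hq)

end DruryArveson

end Aux

/-- For homogeneous ideals `I_1, …, I_k` of `ℂ[z]`:
(1) `F_{I_1 + … + I_k} = F_{I_1} ∩ … ∩ F_{I_k}`, which is the orthogonal complement of
the algebraic sum `F_{I_1}^⊥ + … + F_{I_k}^⊥`; and
(2) `F_{I_1 ∩ … ∩ I_k}` is the closure of the algebraic sum `F_{I_1} + … + F_{I_k}`. -/
theorem FI_sum_and_inter {d k : ℕ} (hk : 0 < k) (DA : DruryArveson d)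
    (I : Fin k → Ideal (MvPolynomial (Fin d) ℂ)) (hI : ∀ j, IsHomogeneousIdeal (I j)) :
    (DA.FI (⨆ j, I j) = ⨅ j, DA.FI (I j) ∧
      DA.FI (⨆ j, I j) = (⨆ j, (DA.FI (I j))ᗮ)ᗮ) ∧
    DA.FI (⨅ j, I j) = (⨆ j, DA.FI (I j)).topologicalClosure := by
  classical
  set Nf : Fin k → Submodule ℂ DA.H :=
    fun j => Submodule.map DA.emb (Submodule.restrictScalars ℂ (I j)) with hNf
  have hFI : ∀ j, DA.FI (I j) = ((Nf j).topologicalClosure)ᗮ := fun j => rfl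
  have hFIperp : ∀ j, (DA.FI (I j))ᗮ = (Nf j).topologicalClosure := by
    intro j
    rw [hFI, Submodule.orthogonal_orthogonal_eq_closure,
      (Nf j).isClosed_topologicalClosure.submodule_topologicalClosure_eq]
  -- Part 1a
  have h1a : DA.FI (⨆ j, I j) = ⨅ j, DA.FI (I j) := by
    show ((Submodule.map DA.emb
      (Submodule.restrictScalars ℂ (⨆ j, I j))).topologicalClosure)ᗮ = _
    rw [restrictScalars_iSup', Submodule.map_iSup, orth_topClosure,
      ← Submodule.iInf_orthogonal]
    exact iInf_congr fun j => by rw [hFI, orth_topClosure]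
  -- Part 1b
  have h1b : DA.FI (⨆ j, I j) = (⨆ j, (DA.FI (I j))ᗮ)ᗮ := by
    rw [h1a]
    simp only [hFIperp]
    rw [← Submodule.iInf_orthogonal]
    exact iInf_congr hFI
  refine ⟨⟨h1a, h1b⟩, ?_⟩
  -- Part 2
  set A : Submodule ℂ DA.H :=
    Submodule.map DA.emb (Submodule.restrictScalars ℂ (⨅ j, I j)) with hA
  have key : A.topologicalClosure = ⨅ j, (Nf j).topologicalClosure := by
    apply le_antisymm
    · refine le_iInf fun j => Submodule.topologicalClosure_mono (Submodule.map_mono ?_)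
      intro x hx
      rw [Submodule.restrictScalars_mem] at hx ⊢
      exact (iInf_le I j) hx
    · intro x hx
      have hxj : ∀ j, x ∈ closure ((Nf j : Set DA.H)) := by
        intro j
        have := (Submodule.mem_iInf _).1 hx j
        exact this
      show x ∈ closure (A : Set DA.H)
      rw [Metric.mem_closure_iff]
      intro ε hε
      obtain ⟨p, hp⟩ := DA.denseRange.exists_dist_lt x hε
      set N := p.totalDegree with hN
      set T : Submodule ℂ DA.H :=
        Submodule.map DA.emb (restrictTotalDegree (Fin d) ℂ N) with hT
      set Q : DA.H →L[ℂ] DA.H := T.subtypeL.comp (Submodule.orthogonalProjection T) with hQdef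
      have hQx : ∀ j, Q x ∈ Submodule.map DA.emb
          (Submodule.restrictScalars ℂ (I j) ⊓ restrictTotalDegree (Fin d) ℂ N) := by
        intro j
        set B : Submodule ℂ DA.H := Submodule.map DA.emb
          (Submodule.restrictScalars ℂ (I j) ⊓ restrictTotalDegree (Fin d) ℂ N) with hB
        haveI : FiniteDimensional ℂ
            (Submodule.restrictScalars ℂ (I j) ⊓ restrictTotalDegree (Fin d) ℂ N :
              Submodule ℂ (MvPolynomial (Fin d) ℂ)) :=
          Submodule.finiteDimensional_of_le inf_le_right
        have hBclosed : IsClosed (B : Set DA.H) := B.closed_of_finiteDimensional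
        have himg : Q '' (Nf j : Set DA.H) ⊆ (B : Set DA.H) := by
          rintro _ ⟨_, ⟨q, hq, rfl⟩, rfl⟩
          refine ⟨DruryArveson.trunc N q, ⟨?_, ?_⟩, ?_⟩
          · refine Submodule.sum_mem _ fun n _ => ?_
            exact hI j q hq n
          · exact (mem_restrictTotalDegree _ _ _).2 (DruryArveson.trunc_totalDegree_le N q)
          · exact (DA.orthogonalProjection_emb N q).symm
        have hmem : Q x ∈ closure (Q '' (Nf j : Set DA.H)) :=
          mem_closure_image Q.continuous.continuousAt (hxj j)
        exact closure_minimal himg hBclosed hmem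
      obtain ⟨q0, hq0, hq0e⟩ := hQx ⟨0, hk⟩
      refine ⟨Q x, ?_, ?_⟩
      · refine ⟨q0, ?_, hq0e⟩
        have hq0' : q0 ∈ (⨅ j, I j : Ideal (MvPolynomial (Fin d) ℂ)) := by
          rw [Submodule.mem_iInf]
          intro j
          obtain ⟨qj, hqj, hqje⟩ := hQx j
          have hq : qj = q0 := DA.emb_injective (hqje.trans hq0e.symm)
          exact hq ▸ (Submodule.mem_inf.1 hqj).1
        exact hq0'
      · have hQxval : Q x = (Submodule.orthogonalProjection T x : DA.H) := rfl
        have hdist : dist x (Q x) = ‖x - (Submodule.orthogonalProjection T x : DA.H)‖ := by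
          rw [hQxval, dist_eq_norm]
        rw [hdist, ← Submodule.starProjection_apply, Submodule.starProjection_minimal]
        have hbdd : BddBelow (Set.range fun w : T => ‖x - (w : DA.H)‖) := by
          refine ⟨0, ?_⟩
          rintro r ⟨w, rfl⟩
          exact norm_nonneg _
        have hpe : DA.emb p ∈ T :=
          ⟨p, (mem_restrictTotalDegree _ _ _).2 le_rfl, rfl⟩
        calc ⨅ w : T, ‖x - (w : DA.H)‖ ≤ ‖x - DA.emb p‖ := ciInf_le hbdd ⟨DA.emb p, hpe⟩
          _ < ε := by rw [← dist_eq_norm]; exact hp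
  -- Assemble part 2
  rw [← Submodule.orthogonal_orthogonal_eq_closure, ← Submodule.iInf_orthogonal]
  simp only [hFIperp]
  rw [← key]
  rfl

end
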